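/- Suppose the logging policy has universal support: π₀(a|x) > 0 for all x ∈ X and a ∈ A. Then the single-sample variance of the IPS estimator decomposes as: ∑_{x,a} p(x)·π₀(a|x)·w(x,a)²·m₂A(x,a) − ( ∑_{x,a} p(x)·π₀(a|x)·w(x,a)·q_A(x,a) )² = ∑_{x,a} p(x)·π₀(a|x)·w(x,a)²·σ²A(x,a) + [ ∑_{x} p(x)·g(x)² − ( ∑_{x} p(x)·g(x) )² ] + ∑_{x} p(x)·[ ∑_{a} π₀(a|x)·(w(x,a)·q_A(x,a))² − g(x)² ], where g(x) := ∑_{a} π₀(a|x)·w(x,a)·q_A(x,a) and σ²A(x,a) := m₂A(x,a) − q_A(x,a)². -/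
import Mathlib


open Finset

/-- Vanilla importance weight `w(x,a) = π(a|x)/π₀(a|x)`. -/
noncomputable def wA {X A : Type*} (πt π₀ : X → A → ℝ) (x : X) (a : A) : ℝ :=
  πt x a / π₀ x a

/-- Action-level expected reward `q_A(x,a) = ∑_e φ(e|x,a)·q(x,a,e)`. -/
noncomputable def qA {X A E : Type*} [Fintype E]
    (φ : X → A → E → ℝ) (q : X → A → E → ℝ) (x : X) (a : A) : ℝ :=
  ∑ e, φ x a e * q x a e

/-- Action-level conditional second moment `m₂A(x,a) = ∑_e φ(e|x,a)·m₂(x,a,e)`. -/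
noncomputable def m2A {X A E : Type*} [Fintype E]
    (φ : X → A → E → ℝ) (m₂ : X → A → E → ℝ) (x : X) (a : A) : ℝ :=
  ∑ e, φ x a e * m₂ x a e

/-- Variance decomposition of the single-sample IPS estimator under universal
support into the reward-noise term, the context-variance term, and the
action-level weighting penalty term. -/
theorem ips_variance_decomposition
    {X A E : Type*} [Fintype X] [Fintype A] [Fintype E]
    (p : X → ℝ) (πt π₀ : X → A → ℝ) (φ : X → A → E → ℝ)
    (q m₂ : X → A → E → ℝ) (g : X → ℝ) (σ2A : X → A → ℝ)
    (hp : ∀ x, 0 ≤ p x) (hp1 : ∑ x, p x = 1)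
    (hπt : ∀ x a, 0 ≤ πt x a) (hπt1 : ∀ x, ∑ a, πt x a = 1)
    (hπ₀pos : ∀ x a, 0 < π₀ x a) (hπ₀1 : ∀ x, ∑ a, π₀ x a = 1)
    (hφ : ∀ x a e, 0 ≤ φ x a e) (hφ1 : ∀ x a, ∑ e, φ x a e = 1)
    (hg : ∀ x, g x = ∑ a, π₀ x a * wA πt π₀ x a * qA φ q x a)
    (hσ : ∀ x a, σ2A x a = m2A φ m₂ x a - qA φ q x a ^ 2) :
    (∑ x, ∑ a, p x * π₀ x a * wA πt π₀ x a ^ 2 * m2A φ m₂ x a) -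
        (∑ x, ∑ a, p x * π₀ x a * wA πt π₀ x a * qA φ q x a) ^ 2 =
      (∑ x, ∑ a, p x * π₀ x a * wA πt π₀ x a ^ 2 * σ2A x a) +
        ((∑ x, p x * g x ^ 2) - (∑ x, p x * g x) ^ 2) +
        (∑ x, p x * ((∑ a, π₀ x a * (wA πt π₀ x a * qA φ q x a) ^ 2) - g x ^ 2)) := by
  have key : ∑ x, ∑ a, p x * π₀ x a * wA πt π₀ x a * qA φ q x a = ∑ x, p x * g x := by
    refine Finset.sum_congr rfl fun x _ => ?_
    rw [hg, Finset.mul_sum]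
    exact Finset.sum_congr rfl fun a _ => by ring
  rw [key]
  simp only [hσ, mul_sub, Finset.sum_sub_distrib, Finset.mul_sum]
  have h2 : ∀ x : X, ∑ a, p x * π₀ x a * wA πt π₀ x a ^ 2 * qA φ q x a ^ 2
      = ∑ a, p x * (π₀ x a * (wA πt π₀ x a * qA φ q x a) ^ 2) := fun x =>
    Finset.sum_congr rfl fun a _ => by ring
  simp only [h2]
  ring
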